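/- arXiv:2005.05820 — 2 statements merged into one kernel-verified Lean document; each statement's English description precedes it below -/
import Mathlib

section
/- Let k > 0, M > 0, and let g : [0, ∞) → ℂ be twice continuously differentiable with |g(s)|, |g′(s)|, |g″(s)| ≤ M·(1 + s)^{−1/2} for all s ≥ 0. For σ ∈ {+1, −1} define J_σ(r, α) = i ∫₀^∞ g(s) · e^{r s cos α} · e^{i σ r sin α √(k² + s²)} ds. Then there exists a constant C > 0, depending only on k and M, such that for all r ≥ 1, all α ∈ [3π/4, π], and both σ ∈ {+1, −1}, |J_σ(r, α) − g(0) e^{i σ k r sin α}/(i r cos α)| ≤ C·r^{−2}. -/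
open MeasureTheory Set Filter

private lemma keyIneq {M k r a : ℝ} (hM : 0 < M) (hk : 0 < k) (hr0 : 0 < r)
    (ha0 : 0 < a) (hra : r ≤ 2 * a) :
    (M + 2 * M * r / (k * a)) * a⁻¹ * (a / 2)⁻¹ ≤ (8 * M + 32 * M / k) * (r ^ 2)⁻¹ := by
  have e1 : (M + 2 * M * r / (k * a)) * a⁻¹ * (a / 2)⁻¹
      = 2 * (M * k * a + 2 * M * r) / (k * a ^ 3) := by
    field_simp
  have e2 : (8 * M + 32 * M / k) * (r ^ 2)⁻¹ = (8 * M * k + 32 * M) / (k * r ^ 2) := by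
    field_simp
  rw [e1, e2, div_le_div_iff₀ (by positivity) (by positivity)]
  have h1 : r ^ 2 ≤ 4 * a ^ 2 := by nlinarith
  have h2 : r ^ 3 ≤ 8 * a ^ 3 := by nlinarith
  have h3 : 2 * M * k * a * r ^ 2 ≤ 8 * M * k * a ^ 3 := by nlinarith [mul_pos hM hk, mul_pos (mul_pos hM hk) ha0]
  have h4 : 4 * M * r ^ 3 ≤ 32 * M * a ^ 3 := by nlinarith
  nlinarith [mul_pos hM hk, mul_pos hk ha0]

private lemma expDecayIntegrable' {β : ℝ} (hβ : 0 < β) :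
    IntegrableOn (fun s => Real.exp (-(β * s))) (Ioi (0:ℝ)) := by
  simpa [neg_mul] using exp_neg_integrableOn_Ioi 0 hβ

private lemma expDecayDeriv' {β : ℝ} (hβ : 0 < β) (x : ℝ) :
    HasDerivAt (fun s => -Real.exp (-(β * s)) / β) (Real.exp (-(β * x))) x := by
  have h1 : HasDerivAt (fun s : ℝ => -(β * s)) (-β) x := by
    have h := ((hasDerivAt_id x).const_mul β).neg
    simp only [id, mul_one] at h
    exact h
  have h2 := (h1.exp.neg).div_const β
  refine h2.congr_deriv ?_
  field_simp

private lemma expDecayIntegral' {β : ℝ} (hβ : 0 < β) :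
    ∫ s in Ioi (0:ℝ), Real.exp (-(β * s)) = β⁻¹ := by
  have htend : Tendsto (fun s => -Real.exp (-(β * s)) / β) atTop (nhds 0) := by
    have h0 : Tendsto (fun s : ℝ => -(β * s)) atTop atBot :=
      tendsto_neg_atTop_atBot.comp (tendsto_id.const_mul_atTop hβ)
    simpa using (Real.tendsto_exp_atBot.comp h0).neg.div_const β
  have := integral_Ioi_of_hasDerivAt_of_tendsto
    (f := fun s => -Real.exp (-(β * s)) / β) (f' := fun s => Real.exp (-(β * s)))
    (a := 0) (m := 0)
    ((expDecayDeriv' hβ 0).continuousAt.continuousWithinAt)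
    (fun x _ => expDecayDeriv' hβ x) (expDecayIntegrable' hβ) htend
  rw [this]; simp; field_simp


set_option maxHeartbeats 2000000 in
/-- branch-ray estimate. Let `g : [0,∞) → ℂ` be twice continuously
differentiable (derivatives `g'`, `g''` within `[0,∞)`) with
`|g|, |g′|, |g″| ≤ M(1+s)^{−1/2}`. For `σ = ±1` let
`J_σ(r,α) = i∫₀^∞ g(s) e^{r s cos α} e^{iσ r sin α √(k²+s²)} ds`. Then there is `C > 0`
(depending only on `k`, `M`) with
`|J_σ(r,α) − g(0) e^{iσkr sin α}/(i r cos α)| ≤ C r^{−2}` for all `r ≥ 1`,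
`α ∈ [3π/4, π]`, and both signs `σ`; moreover the integral converges absolutely. -/
theorem stmt10 (k M : ℝ) (hk : 0 < k) (hM : 0 < M)
    (g g' g'' : ℝ → ℂ)
    (hg' : ∀ s ∈ Set.Ici (0 : ℝ), HasDerivWithinAt g (g' s) (Set.Ici 0) s)
    (hg'' : ∀ s ∈ Set.Ici (0 : ℝ), HasDerivWithinAt g' (g'' s) (Set.Ici 0) s)
    (hcont : ContinuousOn g'' (Set.Ici 0))
    (hb0 : ∀ s : ℝ, 0 ≤ s → ‖g s‖ ≤ M * (1 + s) ^ (-(1 / 2) : ℝ))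
    (hb1 : ∀ s : ℝ, 0 ≤ s → ‖g' s‖ ≤ M * (1 + s) ^ (-(1 / 2) : ℝ))
    (hb2 : ∀ s : ℝ, 0 ≤ s → ‖g'' s‖ ≤ M * (1 + s) ^ (-(1 / 2) : ℝ)) :
    ∃ C > 0, ∀ r α σ : ℝ, 1 ≤ r → α ∈ Set.Icc (3 * Real.pi / 4) Real.pi →
      (σ = 1 ∨ σ = -1) →
      MeasureTheory.IntegrableOn
        (fun s : ℝ => g s * ((Real.exp (r * s * Real.cos α) : ℝ) : ℂ) *
          Complex.exp (Complex.I * ((σ * r * Real.sin α * Real.sqrt (k ^ 2 + s ^ 2) : ℝ) : ℂ)))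
        (Set.Ici 0) ∧
      ‖Complex.I * (∫ s in Set.Ici (0 : ℝ),
            g s * ((Real.exp (r * s * Real.cos α) : ℝ) : ℂ) *
              Complex.exp
                (Complex.I * ((σ * r * Real.sin α * Real.sqrt (k ^ 2 + s ^ 2) : ℝ) : ℂ)))
          - g 0 * Complex.exp (Complex.I * ((σ * k * r * Real.sin α : ℝ) : ℂ)) /
              (Complex.I * ((r * Real.cos α : ℝ) : ℂ))‖ ≤ C * (r ^ 2)⁻¹ := by
  have hpow : ∀ s : ℝ, 0 ≤ s → M * (1 + s) ^ (-(1 / 2) : ℝ) ≤ M := by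
    intro s hs
    have h1 : (1 + s) ^ (-(1 / 2) : ℝ) ≤ 1 :=
      Real.rpow_le_one_of_one_le_of_nonpos (by linarith) (by norm_num)
    nlinarith
  have hM0 : ∀ s : ℝ, 0 ≤ s → ‖g s‖ ≤ M := fun s hs => (hb0 s hs).trans (hpow s hs)
  have hM1 : ∀ s : ℝ, 0 ≤ s → ‖g' s‖ ≤ M := fun s hs => (hb1 s hs).trans (hpow s hs)
  -- sqrt function
  set φ : ℝ → ℝ := fun s => Real.sqrt (k ^ 2 + s ^ 2) with hφdef
  have hφpos : ∀ s, 0 < φ s := fun s => Real.sqrt_pos.2 (by positivity)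
  have hφk : ∀ s, k ≤ φ s := by
    intro s
    rw [hφdef]
    calc k = Real.sqrt (k ^ 2) := by rw [Real.sqrt_sq hk.le]
    _ ≤ Real.sqrt (k ^ 2 + s ^ 2) := Real.sqrt_le_sqrt (by nlinarith)
  have hφ0 : φ 0 = k := by
    simp only [hφdef]; rw [show k ^ 2 + (0:ℝ) ^ 2 = k ^ 2 by ring, Real.sqrt_sq hk.le]
  have hφd : ∀ s, HasDerivAt φ (s / φ s) s := by
    intro s
    have hpos : 0 < k ^ 2 + s ^ 2 := by positivity
    have h1 : HasDerivAt (fun s : ℝ => k ^ 2 + s ^ 2) (2 * s) s := by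
      simpa using ((hasDerivAt_pow 2 s).const_add (k ^ 2))
    have := (Real.hasDerivAt_sqrt hpos.ne').comp s h1
    refine this.congr_deriv ?_
    have hs : Real.sqrt (k ^ 2 + s ^ 2) ≠ 0 := by positivity
    rw [hφdef]; field_simp
  have hgcont : ContinuousOn g (Ici 0) := fun s hs => (hg' s hs).continuousWithinAt
  refine ⟨8 * M + 32 * M / k, by positivity, ?_⟩
  intro r α σ hr hα hσ
  have hr0 : (0:ℝ) < r := by linarith
  -- trig bounds
  have hπ : (0:ℝ) < Real.pi := Real.pi_pos
  have hcos : Real.cos α ≤ -(1/2) := by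
    have h1 : Real.cos α ≤ Real.cos (3 * Real.pi / 4) :=
      Real.cos_le_cos_of_nonneg_of_le_pi (by positivity) hα.2 hα.1
    have h2 : Real.cos (3 * Real.pi / 4) = -(Real.sqrt 2 / 2) := by
      rw [show 3 * Real.pi / 4 = Real.pi - Real.pi / 4 by ring, Real.cos_pi_sub,
        Real.cos_pi_div_four]
    have h3 : (1:ℝ) ≤ Real.sqrt 2 := by
      nlinarith [Real.sq_sqrt (by norm_num : (0:ℝ) ≤ 2), Real.sqrt_nonneg 2]
    rw [h2] at h1; linarith
  have hsin : |Real.sin α| ≤ 1 := abs_le.mpr ⟨Real.neg_one_le_sin α, Real.sin_le_one α⟩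
  set c := Real.cos α with hcdef
  set b := σ * r * Real.sin α with hbdef
  have hb : |b| ≤ r := by
    have : |b| = |σ| * r * |Real.sin α| := by
      rw [hbdef, abs_mul, abs_mul, abs_of_pos hr0]
    have hσ1 : |σ| = 1 := by rcases hσ with h | h <;> rw [h] <;> norm_num
    rw [this, hσ1]
    nlinarith [abs_nonneg (Real.sin α)]
  set a := -(r * c) with hadef
  have ha2 : r / 2 ≤ a := by rw [hadef]; nlinarith
  have ha0 : 0 < a := by linarith
  have hrclt : r * c < 0 := by nlinarith
  have hrc : (r * c) ≠ 0 := ne_of_lt hrclt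
  have hrcC : ((r * c : ℝ) : ℂ) ≠ 0 := by exact_mod_cast hrc
  -- phase
  set E : ℝ → ℂ := fun s => ((r * c * s : ℝ) : ℂ) + Complex.I * ((b * φ s : ℝ) : ℂ) with hEdef
  have hEd : ∀ s, HasDerivAt E (((r * c : ℝ) : ℂ) + Complex.I * ((b * (s / φ s) : ℝ) : ℂ)) s := by
    intro s
    have h1 : HasDerivAt (fun s : ℝ => r * c * s) (r * c) s := by
      simpa using (hasDerivAt_id s).const_mul (r * c)
    have h2 : HasDerivAt (fun s : ℝ => b * φ s) (b * (s / φ s)) s := (hφd s).const_mul b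
    exact (h1.ofReal_comp).add ((h2.ofReal_comp).const_mul Complex.I)
  have hEnorm : ∀ s, ‖Complex.exp (E s)‖ = Real.exp (-(a * s)) := by
    intro s
    rw [hEdef]
    simp [Complex.norm_exp]
    rw [hadef]; ring
  set f : ℝ → ℂ := fun s : ℝ => g s * ((Real.exp (r * s * c) : ℝ) : ℂ) *
      Complex.exp (Complex.I * ((b * Real.sqrt (k ^ 2 + s ^ 2) : ℝ) : ℂ)) with hfdef
  have hfE : ∀ s, f s = g s * Complex.exp (E s) := by
    intro s
    rw [hfdef, hEdef]
    show g s * _ * _ = _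
    rw [Complex.exp_add, ← Complex.ofReal_exp, show r * c * s = r * s * c by ring]
    rw [show Real.sqrt (k ^ 2 + s ^ 2) = φ s from rfl]
    ring
  set d : ℂ := ((r * c : ℝ) : ℂ)⁻¹ with hddef
  have hdnorm : ‖d‖ = a⁻¹ := by
    rw [hddef, norm_inv, Complex.norm_real, Real.norm_eq_abs, abs_of_neg (by nlinarith : r * c < 0),
      hadef]
  set Q : ℝ → ℂ := fun s =>
    (g' s + g s * (Complex.I * ((b * (s / φ s) : ℝ) : ℂ))) * Complex.exp (E s) * d with hQdef
  set P : ℝ → ℂ := fun s => g s * Complex.exp (E s) * d with hPdef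
  have hPd : ∀ s ∈ Ioi (0:ℝ), HasDerivAt P (f s + Q s) s := by
    intro s hs
    have hgd : HasDerivAt g (g' s) s :=
      (hg' s (Set.mem_Ici.2 (le_of_lt hs))).hasDerivAt (Ici_mem_nhds hs)
    have h1 := ((hgd.mul (hEd s).cexp).mul_const d)
    refine h1.congr_deriv ?_
    symm
    rw [hfE s, hQdef]
    show g s * Complex.exp (E s) + _ = _
    have hone : ((r * c : ℝ) : ℂ) * d = 1 := mul_inv_cancel₀ hrcC
    linear_combination (-(g s * Complex.exp (E s))) * hone
  -- continuity
  have hEcont : Continuous E := by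
    rw [continuous_iff_continuousAt]; exact fun s => (hEd s).continuousAt
  have hfcont : ContinuousOn f (Ici 0) :=
    ((hgcont.mul hEcont.cexp.continuousOn).congr (fun s _ => hfE s))
  -- integrability of f
  have hfint : IntegrableOn f (Ioi 0) := by
    apply Integrable.mono' ((expDecayIntegrable' ha0).const_mul M)
      ((hfcont.mono Ioi_subset_Ici_self).aestronglyMeasurable measurableSet_Ioi)
    filter_upwards [ae_restrict_mem measurableSet_Ioi] with s hs
    rw [hfE s, norm_mul, hEnorm s]
    exact mul_le_mul_of_nonneg_right (hM0 s (le_of_lt hs)) (Real.exp_nonneg _)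
  have hfint_Ici : IntegrableOn f (Ici 0) := by
    rwa [integrableOn_Ici_iff_integrableOn_Ioi]
  -- bound on Q
  have hQb : ∀ s ∈ Ioi (0:ℝ), ‖Q s‖ ≤ (M + 2 * M * r / (k * a)) * a⁻¹ * Real.exp (-(a / 2 * s)) := by
    intro s hs
    have hs0 : (0:ℝ) ≤ s := le_of_lt hs
    have h1 : ‖Q s‖ = ‖g' s + g s * (Complex.I * ((b * (s / φ s) : ℝ) : ℂ))‖ *
        Real.exp (-(a * s)) * a⁻¹ := by
      rw [hQdef]
      show ‖_ * Complex.exp (E s) * d‖ = _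
      rw [norm_mul, norm_mul, hEnorm s, hdnorm]
    have h2 : ‖g' s + g s * (Complex.I * ((b * (s / φ s) : ℝ) : ℂ))‖ ≤ M + M * (r * (s / k)) := by
      calc ‖g' s + g s * (Complex.I * ((b * (s / φ s) : ℝ) : ℂ))‖
          ≤ ‖g' s‖ + ‖g s‖ * ‖Complex.I * ((b * (s / φ s) : ℝ) : ℂ)‖ := by
            exact (norm_add_le _ _).trans (by rw [norm_mul])
        _ ≤ M + M * (r * (s / k)) := by
            have hI : ‖Complex.I * ((b * (s / φ s) : ℝ) : ℂ)‖ = |b * (s / φ s)| := by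
              rw [norm_mul, Complex.norm_I, one_mul, Complex.norm_real, Real.norm_eq_abs]
            have hq : |b * (s / φ s)| ≤ r * (s / k) := by
              rw [abs_mul, abs_of_nonneg (by positivity : (0:ℝ) ≤ s / φ s)]
              have h3 : s / φ s ≤ s / k := by gcongr; exact hφk s
              have h4 : |b| * (s / φ s) ≤ r * (s / φ s) :=
                mul_le_mul_of_nonneg_right hb (by positivity)
              calc |b| * (s / φ s) ≤ r * (s / φ s) := h4
                _ ≤ r * (s / k) := by gcongr
            rw [hI]
            exact add_le_add (hM1 s hs0) (mul_le_mul (hM0 s hs0) hq (abs_nonneg _) hM.le)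
    have hse : s * Real.exp (-(a * s)) ≤ 2 / a * Real.exp (-(a / 2 * s)) := by
      have hx : a / 2 * s ≤ Real.exp (a / 2 * s) := by
        nlinarith [Real.add_one_le_exp (a / 2 * s)]
      have h5 : s ≤ 2 / a * Real.exp (a / 2 * s) := by
        rw [div_mul_eq_mul_div, le_div_iff₀ ha0]
        nlinarith
      calc s * Real.exp (-(a * s)) ≤ (2 / a * Real.exp (a / 2 * s)) * Real.exp (-(a * s)) := by
            exact mul_le_mul_of_nonneg_right h5 (Real.exp_nonneg _)
        _ = 2 / a * Real.exp (-(a / 2 * s)) := by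
            rw [mul_assoc, ← Real.exp_add]
            congr 2
            ring
    have hee : Real.exp (-(a * s)) ≤ Real.exp (-(a / 2 * s)) := by
      apply Real.exp_le_exp.2
      nlinarith
    rw [h1]
    have h6 : (M + M * (r * (s / k))) * Real.exp (-(a * s))
        ≤ (M + 2 * M * r / (k * a)) * Real.exp (-(a / 2 * s)) := by
      have hMe : M * Real.exp (-(a * s)) ≤ M * Real.exp (-(a / 2 * s)) :=
        mul_le_mul_of_nonneg_left hee hM.le
      have hMre : M * (r * (s / k)) * Real.exp (-(a * s))
          ≤ 2 * M * r / (k * a) * Real.exp (-(a / 2 * s)) := by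
        have : M * (r * (s / k)) * Real.exp (-(a * s))
            = (M * r / k) * (s * Real.exp (-(a * s))) := by ring
        rw [this]
        have h7 : (M * r / k) * (s * Real.exp (-(a * s)))
            ≤ (M * r / k) * (2 / a * Real.exp (-(a / 2 * s))) := by
          apply mul_le_mul_of_nonneg_left hse (by positivity)
        calc (M * r / k) * (s * Real.exp (-(a * s)))
            ≤ (M * r / k) * (2 / a * Real.exp (-(a / 2 * s))) := h7
          _ = 2 * M * r / (k * a) * Real.exp (-(a / 2 * s)) := by
              field_simp
      calc (M + M * (r * (s / k))) * Real.exp (-(a * s))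
          = M * Real.exp (-(a * s)) + M * (r * (s / k)) * Real.exp (-(a * s)) := by ring
        _ ≤ M * Real.exp (-(a / 2 * s)) + 2 * M * r / (k * a) * Real.exp (-(a / 2 * s)) :=
            add_le_add hMe hMre
        _ = (M + 2 * M * r / (k * a)) * Real.exp (-(a / 2 * s)) := by ring
    calc ‖g' s + g s * (Complex.I * ((b * (s / φ s) : ℝ) : ℂ))‖ * Real.exp (-(a * s)) * a⁻¹
        ≤ (M + M * (r * (s / k))) * Real.exp (-(a * s)) * a⁻¹ := by
          apply mul_le_mul_of_nonneg_right (mul_le_mul_of_nonneg_right h2 (Real.exp_nonneg _))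
          positivity
      _ ≤ (M + 2 * M * r / (k * a)) * Real.exp (-(a / 2 * s)) * a⁻¹ := by
          apply mul_le_mul_of_nonneg_right h6; positivity
      _ = (M + 2 * M * r / (k * a)) * a⁻¹ * Real.exp (-(a / 2 * s)) := by ring
  -- integrability of Q
  have ha20 : (0:ℝ) < a / 2 := by linarith
  have hφcont : Continuous φ := by
    rw [continuous_iff_continuousAt]; exact fun s => (hφd s).continuousAt
  have hg'cont : ContinuousOn g' (Ici 0) := fun s hs => (hg'' s hs).continuousWithinAt
  have hw : Continuous (fun s : ℝ => Complex.I * ((b * (s / φ s) : ℝ) : ℂ)) := by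
    apply continuous_const.mul
    apply Complex.continuous_ofReal.comp
    exact continuous_const.mul (continuous_id.div hφcont (fun s => (hφpos s).ne'))
  have hQcont : ContinuousOn Q (Ici 0) := by
    rw [hQdef]
    exact ((hg'cont.add (hgcont.mul hw.continuousOn)).mul
      hEcont.cexp.continuousOn).mul continuousOn_const
  have hQint : IntegrableOn Q (Ioi 0) := by
    apply Integrable.mono'
      ((expDecayIntegrable' ha20).const_mul ((M + 2 * M * r / (k * a)) * a⁻¹))
      ((hQcont.mono Ioi_subset_Ici_self).aestronglyMeasurable measurableSet_Ioi)
    filter_upwards [ae_restrict_mem measurableSet_Ioi] with s hs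
    exact hQb s hs
  -- tendsto of P at infinity
  have hPtend : Tendsto P atTop (nhds (0:ℂ)) := by
    apply squeeze_zero_norm' (a := fun s => M * Real.exp (-(a * s)) * a⁻¹)
    · filter_upwards [eventually_ge_atTop (0:ℝ)] with s hs
      rw [hPdef]
      show ‖g s * Complex.exp (E s) * d‖ ≤ _
      rw [norm_mul, norm_mul, hEnorm s, hdnorm]
      apply mul_le_mul_of_nonneg_right _ (by positivity)
      exact mul_le_mul_of_nonneg_right (hM0 s hs) (Real.exp_nonneg _)
    · have h0 : Tendsto (fun s : ℝ => -(a * s)) atTop atBot :=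
        tendsto_neg_atTop_atBot.comp (tendsto_id.const_mul_atTop ha0)
      have := ((Real.tendsto_exp_atBot.comp h0).const_mul M).mul_const a⁻¹
      simpa using this
  have hPcont : ContinuousWithinAt P (Ici 0) 0 :=
    ((hgcont 0 Set.self_mem_Ici).mul hEcont.cexp.continuousAt.continuousWithinAt).mul_const d
  -- FTC
  have hFTC : ∫ s in Ioi (0:ℝ), (f s + Q s) = 0 - P 0 :=
    integral_Ioi_of_hasDerivAt_of_tendsto hPcont hPd (hfint.add hQint) hPtend
  have hsplit : ∫ s in Ioi (0:ℝ), (f s + Q s)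
      = (∫ s in Ioi (0:ℝ), f s) + ∫ s in Ioi (0:ℝ), Q s := integral_add hfint hQint
  have hIf : ∫ s in Ioi (0:ℝ), f s = -(P 0) - ∫ s in Ioi (0:ℝ), Q s := by
    rw [hsplit] at hFTC
    have h := eq_sub_of_add_eq hFTC
    rwa [zero_sub] at h
  -- bound on norm of ∫ Q
  have hQnorm : ‖∫ s in Ioi (0:ℝ), Q s‖
      ≤ (M + 2 * M * r / (k * a)) * a⁻¹ * (a / 2)⁻¹ := by
    have h1 : ‖∫ s in Ioi (0:ℝ), Q s‖
        ≤ ∫ s in Ioi (0:ℝ), (M + 2 * M * r / (k * a)) * a⁻¹ * Real.exp (-(a / 2 * s)) := by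
      apply norm_integral_le_of_norm_le
        ((expDecayIntegrable' ha20).const_mul ((M + 2 * M * r / (k * a)) * a⁻¹))
      filter_upwards [ae_restrict_mem measurableSet_Ioi] with s hs
      exact hQb s hs
    rw [MeasureTheory.integral_const_mul, expDecayIntegral' ha20] at h1
    exact h1
  -- final numeric bound
  have hkey : (M + 2 * M * r / (k * a)) * a⁻¹ * (a / 2)⁻¹ ≤ (8 * M + 32 * M / k) * (r ^ 2)⁻¹ :=
    keyIneq hM hk hr0 ha0 (by linarith)
  -- value of P 0 and main term
  have hP0 : P 0 = g 0 * Complex.exp (Complex.I * ((σ * k * r * Real.sin α : ℝ) : ℂ)) * d := by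
    rw [hPdef]
    show g 0 * Complex.exp (E 0) * d = _
    have hE0 : E 0 = Complex.I * ((σ * k * r * Real.sin α : ℝ) : ℂ) := by
      rw [hEdef]
      show ((r * c * 0 : ℝ) : ℂ) + Complex.I * ((b * φ 0 : ℝ) : ℂ) = _
      rw [hφ0, show b * k = σ * k * r * Real.sin α by rw [hbdef]; ring]
      simp
    rw [hE0]
  have hmain : Complex.I * (-(P 0))
      = g 0 * Complex.exp (Complex.I * ((σ * k * r * Real.sin α : ℝ) : ℂ)) /
          (Complex.I * ((r * c : ℝ) : ℂ)) := by
    rw [hP0, hddef]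
    rw [eq_div_iff (mul_ne_zero Complex.I_ne_zero hrcC)]
    have hone : ((r * c : ℝ) : ℂ) * ((r * c : ℝ) : ℂ)⁻¹ = 1 := mul_inv_cancel₀ hrcC
    set G := g 0 * Complex.exp (Complex.I * ((σ * k * r * Real.sin α : ℝ) : ℂ)) with hGdef
    linear_combination (-(G * ((r * c : ℝ) : ℂ)⁻¹ * ((r * c : ℝ) : ℂ))) * Complex.I_mul_I
      + G * hone
  constructor
  · exact hfint_Ici
  · rw [integral_Ici_eq_integral_Ioi, hIf]
    have hfin : Complex.I * (-(P 0) - ∫ s in Ioi (0:ℝ), Q s)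
        - g 0 * Complex.exp (Complex.I * ((σ * k * r * Real.sin α : ℝ) : ℂ)) /
            (Complex.I * ((r * c : ℝ) : ℂ))
        = -(Complex.I * ∫ s in Ioi (0:ℝ), Q s) := by
      rw [← hmain]
      ring
    rw [hfin, norm_neg, norm_mul, Complex.norm_I, one_mul]
    exact le_trans hQnorm hkey
end

section
/- Let k > 0 and M > 0. There exists a constant C > 0, depending only on k and M, such that for every measurable p : [k, ∞) → ℂ with |p(ξ)| ≤ M for all ξ ≥ k, every r ≥ 1, and every α ∈ [π/4, 3π/4], the integral ∫_k^∞ p(ξ) e^{−i r ξ cos α} e^{−r sin α √(ξ² − k²)} dξ converges absolutely and satisfies |∫_k^∞ p(ξ) e^{−i r ξ cos α} e^{−r sin α √(ξ² − k²)} dξ| ≤ C·r^{−2}. -/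
open MeasureTheory Set Real

lemma sin_ge_aux (α : ℝ) (hα : α ∈ Set.Icc (Real.pi / 4) (3 * Real.pi / 4)) :
    Real.sqrt 2 / 2 ≤ Real.sin α := by
  obtain ⟨h1, h2⟩ := hα
  have hπ := Real.pi_pos
  rcases le_total α (Real.pi / 2) with h | h
  · rw [← Real.sin_pi_div_four]
    exact Real.strictMonoOn_sin.monotoneOn ⟨by linarith, by linarith⟩ ⟨by linarith, h⟩ h1
  · rw [← Real.sin_pi_sub, ← Real.sin_pi_div_four]
    exact Real.strictMonoOn_sin.monotoneOn ⟨by linarith, by linarith⟩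
      ⟨by linarith, by linarith⟩ (by linarith)

lemma exp_sqrt_int (a : ℝ) (ha : 0 < a) :
    MeasureTheory.IntegrableOn (fun u : ℝ => Real.exp (-(a * Real.sqrt u))) (Set.Ioi 0) := by
  have hcont : Continuous fun u : ℝ => Real.exp (-(a * Real.sqrt u)) :=
    Real.continuous_exp.comp ((continuous_const.mul Real.continuous_sqrt).neg)
  rw [show Set.Ioi (0:ℝ) = Set.Ioc 0 1 ∪ Set.Ioi 1 from (Set.Ioc_union_Ioi_eq_Ioi zero_le_one).symm,
    MeasureTheory.integrableOn_union]
  constructor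
  · exact (hcont.integrableOn_Icc (a := 0) (b := 1)).mono_set Set.Ioc_subset_Icc_self
  · refine MeasureTheory.Integrable.mono'
      (((integrableOn_Ioi_rpow_of_lt (by norm_num : (-2:ℝ) < -1) one_pos).const_mul
        (256 / a ^ 4))) hcont.aestronglyMeasurable ?_
    filter_upwards [MeasureTheory.ae_restrict_mem measurableSet_Ioi] with u hu
    have hu1 : (1:ℝ) < u := hu
    have hu0 : (0:ℝ) < u := by linarith
    have hsu : (1:ℝ) ≤ Real.sqrt u := by
      rw [show (1:ℝ) = Real.sqrt 1 from (Real.sqrt_one).symm]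
      exact Real.sqrt_le_sqrt hu1.le
    set t := a * Real.sqrt u with ht
    have ht0 : 0 < t := by positivity
    have hexp : t ^ 4 / 256 ≤ Real.exp t := by
      have h1 : 1 + t / 4 ≤ Real.exp (t / 4) := by
        have := Real.add_one_le_exp (t / 4); linarith
      have h2 : (t / 4) ^ 4 ≤ (1 + t / 4) ^ 4 := by
        apply pow_le_pow_left₀ (by positivity); linarith
      have h3 : (1 + t / 4) ^ 4 ≤ Real.exp (t / 4) ^ 4 := by
        apply pow_le_pow_left₀ (by positivity) h1
      have h4 : Real.exp (t / 4) ^ 4 = Real.exp t := by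
        rw [← Real.exp_nat_mul]; norm_num; ring_nf
      calc t ^ 4 / 256 = (t / 4) ^ 4 := by ring
        _ ≤ (1 + t / 4) ^ 4 := h2
        _ ≤ Real.exp (t / 4) ^ 4 := h3
        _ = Real.exp t := h4
    have hineq : Real.exp (-t) ≤ 256 / t ^ 4 := by
      rw [Real.exp_neg]
      rw [inv_le_comm₀ (Real.exp_pos t) (by positivity), inv_div]
      exact hexp
    have htt : t ^ 4 = a ^ 4 * u ^ 2 := by
      rw [ht]; rw [mul_pow]
      congr 1
      rw [show (4:ℕ) = 2 * 2 by norm_num, pow_mul, Real.sq_sqrt hu0.le]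
    have hrpow : u ^ (-2:ℝ) = (u ^ 2)⁻¹ := by
      rw [show (-2:ℝ) = ((-2:ℤ):ℝ) by norm_num, Real.rpow_intCast]
      simp [zpow_neg]
    rw [Real.norm_eq_abs, abs_of_pos (Real.exp_pos _)]
    calc Real.exp (-t) ≤ 256 / t ^ 4 := hineq
      _ = 256 / a ^ 4 * u ^ (-2:ℝ) := by rw [htt, hrpow]; ring

lemma exp_sqrt_val (a : ℝ) (ha : 0 < a) :
    ∫ u in Set.Ioi (0:ℝ), Real.exp (-(a * Real.sqrt u)) = 2 / a ^ 2 := by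
  have hcong : ∀ u ∈ Set.Ioi (0:ℝ),
      Real.exp (-(a * Real.sqrt u)) = Real.exp (-a * u ^ ((1:ℝ)/2)) := by
    intro u hu
    rw [Real.sqrt_eq_rpow, neg_mul]
  rw [MeasureTheory.setIntegral_congr_fun measurableSet_Ioi hcong]
  rw [integral_exp_neg_mul_rpow (by norm_num : (0:ℝ) < 1/2) ha]
  have h1 : (-1 : ℝ) / (1/2) = -2 := by norm_num
  have h2 : (1:ℝ) / (1/2) + 1 = 3 := by norm_num
  rw [h1, h2]
  have h3 : Real.Gamma 3 = 2 := by
    rw [show (3:ℝ) = (2:ℕ) + 1 by norm_num, Real.Gamma_nat_eq_factorial]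
    norm_num
  rw [h3, show (-2:ℝ) = ((-2:ℤ):ℝ) by norm_num, Real.rpow_intCast]
  rw [zpow_neg]
  rw [div_eq_mul_inv]
  norm_cast
  ring

lemma exp_sqrt_shift (a k : ℝ) (ha : 0 < a) :
    MeasureTheory.IntegrableOn (fun ξ : ℝ => Real.exp (-(a * Real.sqrt (ξ - k)))) (Set.Ici k) ∧
    ∫ ξ in Set.Ici k, Real.exp (-(a * Real.sqrt (ξ - k))) = 2 / a ^ 2 := by
  set g : ℝ → ℝ := fun ξ => Real.exp (-(a * Real.sqrt (ξ - k))) with hg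
  have emb : MeasurableEmbedding (fun u : ℝ => u + k) :=
    (MeasurableEquiv.addRight k).measurableEmbedding
  have mp : MeasurePreserving (fun u : ℝ => u + k) volume volume :=
    measurePreserving_add_right volume k
  have hpre : (fun u : ℝ => u + k) ⁻¹' (Set.Ioi k) = Set.Ioi 0 := by
    ext u; simp
  have hcomp : (g ∘ fun u : ℝ => u + k) = fun u : ℝ => Real.exp (-(a * Real.sqrt u)) := by
    funext u; simp [hg]
  constructor
  · rw [integrableOn_Ici_iff_integrableOn_Ioi]
    have := ((mp.restrict_preimage_emb emb (Set.Ioi k)).integrable_comp_emb emb (g := g))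
    rw [hpre, hcomp] at this
    exact this.mp (exp_sqrt_int a ha)
  · rw [MeasureTheory.integral_Ici_eq_integral_Ioi]
    have := mp.setIntegral_preimage_emb emb g (Set.Ioi k)
    rw [hpre] at this
    rw [← this]
    have : ∀ u ∈ Set.Ioi (0:ℝ), g (u + k) = Real.exp (-(a * Real.sqrt u)) := by
      intro u hu; simp [hg]
    rw [MeasureTheory.setIntegral_congr_fun measurableSet_Ioi this]
    exact exp_sqrt_val a ha


/-- evanescent-spectrum tail estimate. For `k, M > 0` there is `C > 0`
(depending only on `k` and `M`) such that for every measurable `p : [k,∞) → ℂ` with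
`|p| ≤ M`, every `r ≥ 1`, and every `α ∈ [π/4, 3π/4]`, the integral
`∫_k^∞ p(ξ) e^{−i r ξ cos α} e^{−r sin α √(ξ²−k²)} dξ` converges absolutely and is bounded
by `C r^{−2}`. -/
theorem stmt11 (k M : ℝ) (hk : 0 < k) (hM : 0 < M) :
    ∃ C > 0, ∀ p : ℝ → ℂ, Measurable p → (∀ ξ : ℝ, k ≤ ξ → ‖p ξ‖ ≤ M) →
      ∀ r α : ℝ, 1 ≤ r → α ∈ Set.Icc (Real.pi / 4) (3 * Real.pi / 4) →
        MeasureTheory.IntegrableOn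
          (fun ξ : ℝ => p ξ * Complex.exp (-(Complex.I * ((r * ξ * Real.cos α : ℝ) : ℂ))) *
            ((Real.exp (-(r * Real.sin α * Real.sqrt (ξ ^ 2 - k ^ 2))) : ℝ) : ℂ))
          (Set.Ici k) ∧
        ‖∫ ξ in Set.Ici k,
            p ξ * Complex.exp (-(Complex.I * ((r * ξ * Real.cos α : ℝ) : ℂ))) *
              ((Real.exp (-(r * Real.sin α * Real.sqrt (ξ ^ 2 - k ^ 2))) : ℝ) : ℂ)‖ ≤
          C * (r ^ 2)⁻¹ := by
  refine ⟨2 * M / k, by positivity, ?_⟩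
  intro p hp hpb r α hr hα
  set f : ℝ → ℂ := fun ξ =>
    p ξ * Complex.exp (-(Complex.I * ((r * ξ * Real.cos α : ℝ) : ℂ))) *
      ((Real.exp (-(r * Real.sin α * Real.sqrt (ξ ^ 2 - k ^ 2))) : ℝ) : ℂ) with hf
  have hr0 : (0:ℝ) < r := lt_of_lt_of_le one_pos hr
  set b : ℝ := r * Real.sqrt k with hbdef
  have hb : 0 < b := by positivity
  have hsin : Real.sqrt 2 / 2 ≤ Real.sin α := sin_ge_aux α hα
  have hsin0 : 0 ≤ Real.sin α := le_trans (by positivity) hsin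
  -- pointwise bound
  have hbound : ∀ ξ ∈ Set.Ici k, ‖f ξ‖ ≤ M * Real.exp (-(b * Real.sqrt (ξ - k))) := by
    intro ξ hξ
    have hξk : k ≤ ξ := hξ
    have hsub : 0 ≤ ξ - k := sub_nonneg.mpr hξk
    have hnorm1 : ‖Complex.exp (-(Complex.I * ((r * ξ * Real.cos α : ℝ) : ℂ)))‖ = 1 := by
      rw [Complex.norm_exp]
      simp [Complex.mul_re]
    have hnorm2 : ‖((Real.exp (-(r * Real.sin α * Real.sqrt (ξ ^ 2 - k ^ 2))) : ℝ) : ℂ)‖ =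
        Real.exp (-(r * Real.sin α * Real.sqrt (ξ ^ 2 - k ^ 2))) := by
      rw [Complex.norm_real, Real.norm_eq_abs, abs_of_pos (Real.exp_pos _)]
    -- exponent comparison
    have hexp : b * Real.sqrt (ξ - k) ≤ r * Real.sin α * Real.sqrt (ξ ^ 2 - k ^ 2) := by
      have h4 : Real.sqrt 2 * Real.sqrt (2 * k) = 2 * Real.sqrt k := by
        rw [← Real.sqrt_mul (by norm_num : (0:ℝ) ≤ 2), show (2:ℝ) * (2 * k) = 2 ^ 2 * k by ring,
          Real.sqrt_mul (by positivity), Real.sqrt_sq (by norm_num : (0:ℝ) ≤ 2)]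
      have h1 : Real.sqrt (2 * k) * Real.sqrt (ξ - k) = Real.sqrt ((2 * k) * (ξ - k)) :=
        (Real.sqrt_mul (by positivity) _).symm
      have h2 : (2 * k) * (ξ - k) ≤ ξ ^ 2 - k ^ 2 := by nlinarith
      have h3 : Real.sqrt ((2 * k) * (ξ - k)) ≤ Real.sqrt (ξ ^ 2 - k ^ 2) :=
        Real.sqrt_le_sqrt h2
      have hkey : Real.sqrt k * Real.sqrt (ξ - k) ≤ Real.sin α * Real.sqrt (ξ ^ 2 - k ^ 2) := by
        have e1 : Real.sqrt k * Real.sqrt (ξ - k)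
            = (Real.sqrt 2 / 2) * (Real.sqrt (2 * k) * Real.sqrt (ξ - k)) := by
          rw [← mul_assoc, div_mul_eq_mul_div, h4]; ring
        rw [e1, h1]
        calc (Real.sqrt 2 / 2) * Real.sqrt ((2 * k) * (ξ - k))
            ≤ (Real.sqrt 2 / 2) * Real.sqrt (ξ ^ 2 - k ^ 2) := by
              apply mul_le_mul_of_nonneg_left h3 (by positivity)
          _ ≤ Real.sin α * Real.sqrt (ξ ^ 2 - k ^ 2) :=
              mul_le_mul_of_nonneg_right hsin (Real.sqrt_nonneg _)
      calc b * Real.sqrt (ξ - k) = r * (Real.sqrt k * Real.sqrt (ξ - k)) := by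
            rw [hbdef]; ring
        _ ≤ r * (Real.sin α * Real.sqrt (ξ ^ 2 - k ^ 2)) :=
            mul_le_mul_of_nonneg_left hkey hr0.le
        _ = r * Real.sin α * Real.sqrt (ξ ^ 2 - k ^ 2) := by ring
    rw [hf]
    simp only [norm_mul, hnorm1, hnorm2, mul_one]
    exact mul_le_mul (hpb ξ hξk) (Real.exp_le_exp.mpr (by linarith))
      (Real.exp_pos _).le hM.le
  have hgint : MeasureTheory.IntegrableOn
      (fun ξ : ℝ => M * Real.exp (-(b * Real.sqrt (ξ - k)))) (Set.Ici k) :=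
    (exp_sqrt_shift b k hb).1.const_mul M
  have hfmeas : MeasureTheory.AEStronglyMeasurable f
      (MeasureTheory.volume.restrict (Set.Ici k)) := by
    apply Measurable.aestronglyMeasurable
    apply Measurable.mul
    apply Measurable.mul hp
    · exact Complex.measurable_exp.comp <| Measurable.neg <|
        measurable_const.mul <| Complex.measurable_ofReal.comp <|
          (measurable_const.mul measurable_id).mul measurable_const
    · refine Complex.measurable_ofReal.comp <| Real.measurable_exp.comp <| Measurable.neg <|
        measurable_const.mul <|
          Real.continuous_sqrt.measurable.comp <|
            (measurable_id.pow_const 2).sub measurable_const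
  have hfint : MeasureTheory.IntegrableOn f (Set.Ici k) := by
    apply MeasureTheory.Integrable.mono' hgint hfmeas
    filter_upwards [MeasureTheory.ae_restrict_mem measurableSet_Ici] with ξ hξ
    exact hbound ξ hξ
  refine ⟨hfint, ?_⟩
  have hb2 : b ^ 2 = r ^ 2 * k := by
    rw [hbdef, mul_pow, Real.sq_sqrt hk.le]
  calc ‖∫ ξ in Set.Ici k, f ξ‖ ≤ ∫ ξ in Set.Ici k, ‖f ξ‖ :=
        MeasureTheory.norm_integral_le_integral_norm _
    _ ≤ ∫ ξ in Set.Ici k, M * Real.exp (-(b * Real.sqrt (ξ - k))) :=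
        MeasureTheory.setIntegral_mono_on hfint.norm hgint measurableSet_Ici hbound
    _ = M * ∫ ξ in Set.Ici k, Real.exp (-(b * Real.sqrt (ξ - k))) :=
        MeasureTheory.integral_const_mul M _
    _ = M * (2 / b ^ 2) := by rw [(exp_sqrt_shift b k hb).2]
    _ = 2 * M / k * (r ^ 2)⁻¹ := by rw [hb2]; field_simp
end
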